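/- Let α > 0, C₁ > 0, C₂ > 0 and starting values b₁⁽¹⁾, b₁⁽²⁾ ∈ [0,1]. Define two sequences recursively for n ≥ 2 by bₙ⁽¹⁾ := C₁·(n−1)⁻¹·Σ_{n₁+n₂=n, n₁,n₂≥1} min(n₁,n₂)^α · b_{n₁}⁽¹⁾ b_{n₂}⁽²⁾ and bₙ⁽²⁾ := C₂·n·(n−1)⁻¹·Σ_{n₁+n₂=n, n₁,n₂≥1} min(n₁,n₂)^α · b_{n₁}⁽¹⁾ b_{n₂}⁽¹⁾. Then there exists γ > 1 (one may take γ := 2^{α+5}·max(C₁,C₂,1)) such that bₙ⁽¹⁾ ≤ n^{−α−2} γ^{n−1} and bₙ⁽²⁾ ≤ n^{−α−2} γ^{n−1} for all n ≥ 1. -/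

import Mathlib

open Finset

lemma sumsq (n : ℕ) (hn : 2 ≤ n) :
    ∑ k ∈ Finset.Ico 1 n, ((k:ℝ)^2)⁻¹ ≤ 2 - ((n:ℝ)-1)⁻¹ := by
  induction n, hn using Nat.le_induction with
  | base => norm_num
  | succ n hn ih =>
    rw [Finset.sum_Ico_succ_top (by omega : 1 ≤ n)]
    have h2 : (2:ℝ) ≤ (n:ℝ) := by exact_mod_cast hn
    have h1 : (0:ℝ) < (n:ℝ) - 1 := by linarith
    have h0 : (0:ℝ) < (n:ℝ) := by linarith
    have key : ((n:ℝ)^2)⁻¹ ≤ ((n:ℝ)-1)⁻¹ - (n:ℝ)⁻¹ := by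
      have e : ((n:ℝ)-1)⁻¹ - (n:ℝ)⁻¹ = (((n:ℝ)-1)*(n:ℝ))⁻¹ := by
        field_simp
        ring
      rw [e]
      apply inv_anti₀ (by positivity)
      nlinarith
    have : ((n:ℝ)+1) - 1 = (n:ℝ) := by ring
    push_cast
    rw [this]
    linarith




lemma key_sum (α : ℝ) (hα : 0 < α) (n : ℕ) (hn : 2 ≤ n) :
    ∑ k ∈ Finset.Ico 1 n, (min (k:ℝ) ((n:ℝ)-(k:ℝ)))^α * (k:ℝ)^(-α-2) * ((n-k : ℕ):ℝ)^(-α-2)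
      ≤ (2:ℝ)^(α+4) * (n:ℝ)^(-α-2) := by
  have hn0 : (0:ℝ) < (n:ℝ) := by positivity
  have h24 : (2:ℝ)^(α+4) = (2:ℝ)^(α+2) * 4 := by
    rw [show α+4 = (α+2)+2 by ring, Real.rpow_add (by norm_num : (0:ℝ)<2)]
    norm_num
  have step : ∀ k ∈ Finset.Ico 1 n,
      (min (k:ℝ) ((n:ℝ)-(k:ℝ)))^α * (k:ℝ)^(-α-2) * ((n-k : ℕ):ℝ)^(-α-2)
        ≤ (2:ℝ)^(α+2) * (n:ℝ)^(-α-2) * (((k:ℝ)^2)⁻¹ + (((n-k:ℕ):ℝ)^2)⁻¹) := by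
    intro k hk
    rw [Finset.mem_Ico] at hk
    obtain ⟨hk1, hk2⟩ := hk
    have hnk1 : 1 ≤ n - k := by omega
    set m := min k (n - k) with hm
    set M := max k (n - k) with hM
    have hmin : min (k:ℝ) ((n:ℝ)-(k:ℝ)) = (m:ℝ) := by
      rw [hm, Nat.cast_min, Nat.cast_sub (le_of_lt hk2)]
    have hm1 : 1 ≤ m := le_min hk1 hnk1
    have hmpos : (0:ℝ) < (m:ℝ) := by exact_mod_cast Nat.lt_of_lt_of_le Nat.zero_lt_one hm1
    have hMn : (n:ℝ) ≤ 2 * (M:ℝ) := by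
      have : n ≤ 2 * M := by omega
      exact_mod_cast this
    have hMpos : (0:ℝ) < (M:ℝ) := by
      have : 1 ≤ M := le_trans hk1 (le_max_left _ _)
      exact_mod_cast this
    have hprod : (k:ℝ)^(-α-2) * ((n-k : ℕ):ℝ)^(-α-2) = (m:ℝ)^(-α-2) * (M:ℝ)^(-α-2) := by
      rcases le_total k (n-k) with h | h
      · rw [hm, hM, min_eq_left h, max_eq_right h]
      · rw [hm, hM, min_eq_right h, max_eq_left h]; ring
    have hmm : (m:ℝ)^α * (m:ℝ)^(-α-2) = ((m:ℝ)^2)⁻¹ := by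
      rw [← Real.rpow_add hmpos, show α + (-α - 2) = -(2:ℝ) by ring,
        Real.rpow_neg hmpos.le, show ((2:ℝ)) = ((2:ℕ):ℝ) by norm_num, Real.rpow_natCast]
    have hML : (M:ℝ)^(-α-2) ≤ (2:ℝ)^(α+2) * (n:ℝ)^(-α-2) := by
      have h1 : ((n:ℝ)/2)^(α+2) ≤ (M:ℝ)^(α+2) :=
        Real.rpow_le_rpow (by positivity) (by linarith) (by linarith)
      have e1 : (M:ℝ)^(-α-2) = ((M:ℝ)^(α+2))⁻¹ := by
        rw [show -α-2 = -(α+2) by ring, Real.rpow_neg hMpos.le]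
      have h2 : ((M:ℝ)^(α+2))⁻¹ ≤ (((n:ℝ)/2)^(α+2))⁻¹ :=
        inv_anti₀ (by positivity) h1
      rw [e1]
      refine h2.trans (le_of_eq ?_)
      rw [Real.div_rpow hn0.le (by norm_num), show -α-2 = -(α+2) by ring,
        Real.rpow_neg hn0.le]
      rw [inv_div]
      rw [div_eq_mul_inv]
    have hm2 : ((m:ℝ)^2)⁻¹ ≤ ((k:ℝ)^2)⁻¹ + (((n-k:ℕ):ℝ)^2)⁻¹ := by
      have hknk : (0:ℝ) < ((n-k:ℕ):ℝ) := by exact_mod_cast hnk1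
      have hkpos : (0:ℝ) < (k:ℝ) := by exact_mod_cast hk1
      rcases le_total k (n-k) with h | h
      · rw [hm, min_eq_left h]
        have : (0:ℝ) ≤ (((n-k:ℕ):ℝ)^2)⁻¹ := by positivity
        linarith
      · rw [hm, min_eq_right h]
        have : (0:ℝ) ≤ ((k:ℝ)^2)⁻¹ := by positivity
        linarith
    rw [hmin]
    calc (m:ℝ)^α * (k:ℝ)^(-α-2) * ((n-k : ℕ):ℝ)^(-α-2)
        = (m:ℝ)^α * ((m:ℝ)^(-α-2) * (M:ℝ)^(-α-2)) := by rw [← hprod]; ring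
      _ = ((m:ℝ)^2)⁻¹ * (M:ℝ)^(-α-2) := by rw [← hmm]; ring
      _ ≤ (((k:ℝ)^2)⁻¹ + (((n-k:ℕ):ℝ)^2)⁻¹) * ((2:ℝ)^(α+2) * (n:ℝ)^(-α-2)) := by
          apply mul_le_mul hm2 hML (by positivity) (by positivity)
      _ = (2:ℝ)^(α+2) * (n:ℝ)^(-α-2) * (((k:ℝ)^2)⁻¹ + (((n-k:ℕ):ℝ)^2)⁻¹) := by ring
  have hrefl : ∑ k ∈ Finset.Ico 1 n, (((n-k:ℕ):ℝ)^2)⁻¹ = ∑ k ∈ Finset.Ico 1 n, ((k:ℝ)^2)⁻¹ := by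
    apply Finset.sum_nbij' (fun k => n - k) (fun k => n - k)
    · intro a ha; rw [Finset.mem_Ico] at *; omega
    · intro a ha; rw [Finset.mem_Ico] at *; omega
    · intro a ha; rw [Finset.mem_Ico] at ha; omega
    · intro a ha; rw [Finset.mem_Ico] at ha; omega
    · intro a _; rfl
  have hsq := sumsq n hn
  have hpos : (0:ℝ) < (n:ℝ) - 1 := by
    have : (2:ℝ) ≤ (n:ℝ) := by exact_mod_cast hn
    linarith
  have hsum2 : ∑ k ∈ Finset.Ico 1 n, (((k:ℝ)^2)⁻¹ + (((n-k:ℕ):ℝ)^2)⁻¹) ≤ 4 := by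
    rw [Finset.sum_add_distrib, hrefl]
    have : ((n:ℝ)-1)⁻¹ > 0 := by positivity
    linarith
  calc ∑ k ∈ Finset.Ico 1 n, (min (k:ℝ) ((n:ℝ)-(k:ℝ)))^α * (k:ℝ)^(-α-2) * ((n-k : ℕ):ℝ)^(-α-2)
      ≤ ∑ k ∈ Finset.Ico 1 n, (2:ℝ)^(α+2) * (n:ℝ)^(-α-2) * (((k:ℝ)^2)⁻¹ + (((n-k:ℕ):ℝ)^2)⁻¹) :=
        Finset.sum_le_sum step
    _ = (2:ℝ)^(α+2) * (n:ℝ)^(-α-2) * ∑ k ∈ Finset.Ico 1 n, (((k:ℝ)^2)⁻¹ + (((n-k:ℕ):ℝ)^2)⁻¹) := by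
        rw [← Finset.mul_sum]
    _ ≤ (2:ℝ)^(α+2) * (n:ℝ)^(-α-2) * 4 := by
        apply mul_le_mul_of_nonneg_left hsum2 (by positivity)
    _ = (2:ℝ)^(α+4) * (n:ℝ)^(-α-2) := by rw [h24]; ring


theorem statement_0 (α C₁ C₂ : ℝ) (hα : 0 < α) (hC₁ : 0 < C₁) (hC₂ : 0 < C₂)
    (b₁ b₂ : ℕ → ℝ)
    (hb₁0 : b₁ 1 ∈ Set.Icc (0 : ℝ) 1) (hb₂0 : b₂ 1 ∈ Set.Icc (0 : ℝ) 1)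
    (hrec₁ : ∀ n, 2 ≤ n → b₁ n = C₁ / ((n : ℝ) - 1) *
      ∑ k ∈ Finset.Ico 1 n, (min k (n - k) : ℝ) ^ α * b₁ k * b₂ (n - k))
    (hrec₂ : ∀ n, 2 ≤ n → b₂ n = C₂ * (n : ℝ) / ((n : ℝ) - 1) *
      ∑ k ∈ Finset.Ico 1 n, (min k (n - k) : ℝ) ^ α * b₁ k * b₁ (n - k)) :
    ∃ γ : ℝ, 1 < γ ∧ ∀ n, 1 ≤ n →
      b₁ n ≤ (n : ℝ) ^ (-α - 2) * γ ^ (n - 1) ∧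
      b₂ n ≤ (n : ℝ) ^ (-α - 2) * γ ^ (n - 1) := by
  set M : ℝ := max C₁ (max C₂ 1) with hMdef
  set A : ℝ := (2:ℝ)^(α+4) with hAdef
  set γ : ℝ := (2:ℝ)^(α+5) * M with hγdef
  have hM1 : (1:ℝ) ≤ M := le_trans (le_max_right C₂ 1) (le_max_right _ _)
  have hMC₁ : C₁ ≤ M := le_max_left _ _
  have hMC₂ : C₂ ≤ M := le_trans (le_max_left C₂ 1) (le_max_right _ _)
  have hApos : (0:ℝ) < A := Real.rpow_pos_of_pos (by norm_num) _
  have h25 : (2:ℝ)^(α+5) = 2 * A := by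
    rw [hAdef, show α+5 = 1+(α+4) by ring, Real.rpow_add (by norm_num : (0:ℝ)<2)]
    norm_num
  have hγpos : (0:ℝ) < γ := by
    rw [hγdef]
    exact mul_pos (Real.rpow_pos_of_pos (by norm_num) _) (by linarith)
  have hγ1 : 1 < γ := by
    have h1 : (1:ℝ) < (2:ℝ)^(α+5) := by
      have := Real.rpow_lt_rpow_of_exponent_lt (by norm_num : (1:ℝ) < 2)
        (by linarith : (0:ℝ) < α + 5)
      rwa [Real.rpow_zero] at this
    calc (1:ℝ) < (2:ℝ)^(α+5) := h1
      _ = (2:ℝ)^(α+5) * 1 := by ring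
      _ ≤ γ := by rw [hγdef]; exact mul_le_mul_of_nonneg_left hM1 (by linarith)
  have hγC₁ : C₁ * A ≤ γ := by
    rw [hγdef, h25]
    nlinarith
  have hγC₂ : C₂ * A * 2 ≤ γ := by
    rw [hγdef, h25]
    nlinarith
  refine ⟨γ, hγ1, ?_⟩
  have main : ∀ n, 1 ≤ n →
      (0 ≤ b₁ n ∧ b₁ n ≤ (n:ℝ)^(-α-2) * γ^(n-1)) ∧
      (0 ≤ b₂ n ∧ b₂ n ≤ (n:ℝ)^(-α-2) * γ^(n-1)) := by
    intro n
    induction n using Nat.strong_induction_on with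
    | _ n ih =>
      intro hn1
      rcases eq_or_lt_of_le hn1 with h1 | h2
      · -- n = 1
        subst h1
        simp only [Nat.cast_one, Real.one_rpow, Nat.sub_self, pow_zero, one_mul]
        exact ⟨⟨hb₁0.1, hb₁0.2⟩, ⟨hb₂0.1, hb₂0.2⟩⟩
      · -- 2 ≤ n
        have hn2 : 2 ≤ n := h2
        have hnR : (2:ℝ) ≤ (n:ℝ) := by exact_mod_cast hn2
        have hn1pos : (0:ℝ) < (n:ℝ) - 1 := by linarith
        have hPnn : (0:ℝ) ≤ (n:ℝ)^(-α-2) := Real.rpow_nonneg (by positivity) _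
        have hGnn : (0:ℝ) ≤ γ^(n-2) := le_of_lt (pow_pos hγpos _)
        have hpow : γ^(n-1) = γ^(n-2) * γ := by
          rw [← pow_succ]
          congr 1
          omega
        -- generic sum bound
        have hbound : ∀ (u v : ℕ → ℝ),
            (∀ m, 1 ≤ m → m < n → 0 ≤ u m ∧ u m ≤ (m:ℝ)^(-α-2) * γ^(m-1)) →
            (∀ m, 1 ≤ m → m < n → 0 ≤ v m ∧ v m ≤ (m:ℝ)^(-α-2) * γ^(m-1)) →
            (0 ≤ ∑ k ∈ Finset.Ico 1 n, (min (k:ℝ) ((n:ℝ)-(k:ℝ)))^α * u k * v (n-k)) ∧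
            (∑ k ∈ Finset.Ico 1 n, (min (k:ℝ) ((n:ℝ)-(k:ℝ)))^α * u k * v (n-k)
               ≤ γ^(n-2) * (A * (n:ℝ)^(-α-2))) := by
          intro u v hu hv
          have hmem : ∀ k ∈ Finset.Ico 1 n, 1 ≤ k ∧ k < n ∧ 1 ≤ n - k ∧ n - k < n := by
            intro k hk
            rw [Finset.mem_Ico] at hk
            omega
          have hminnn : ∀ k ∈ Finset.Ico 1 n, (0:ℝ) ≤ (min (k:ℝ) ((n:ℝ)-(k:ℝ)))^α := by
            intro k hk
            obtain ⟨a1, a2, _, _⟩ := hmem k hk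
            apply Real.rpow_nonneg
            apply le_min
            · exact_mod_cast Nat.zero_le k
            · have : (k:ℝ) + 1 ≤ (n:ℝ) := by exact_mod_cast a2
              linarith
          constructor
          · apply Finset.sum_nonneg
            intro k hk
            obtain ⟨a1, a2, a3, a4⟩ := hmem k hk
            exact mul_nonneg (mul_nonneg (hminnn k hk) (hu k a1 a2).1) (hv (n-k) a3 a4).1
          · calc ∑ k ∈ Finset.Ico 1 n, (min (k:ℝ) ((n:ℝ)-(k:ℝ)))^α * u k * v (n-k)
                ≤ ∑ k ∈ Finset.Ico 1 n, γ^(n-2) *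
                    ((min (k:ℝ) ((n:ℝ)-(k:ℝ)))^α * (k:ℝ)^(-α-2) * ((n-k:ℕ):ℝ)^(-α-2)) := by
                  apply Finset.sum_le_sum
                  intro k hk
                  obtain ⟨a1, a2, a3, a4⟩ := hmem k hk
                  have e : γ^(n-2) *
                      ((min (k:ℝ) ((n:ℝ)-(k:ℝ)))^α * (k:ℝ)^(-α-2) * ((n-k:ℕ):ℝ)^(-α-2))
                      = (min (k:ℝ) ((n:ℝ)-(k:ℝ)))^α *
                        ((k:ℝ)^(-α-2) * γ^(k-1)) * (((n-k:ℕ):ℝ)^(-α-2) * γ^(n-k-1)) := by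
                    have : γ^(k-1) * γ^(n-k-1) = γ^(n-2) := by
                      rw [← pow_add]
                      congr 1
                      omega
                    rw [← this]
                    ring
                  rw [e]
                  have h1 := (hu k a1 a2).2
                  have h2 := (hv (n-k) a3 a4).2
                  have h1n := (hu k a1 a2).1
                  have h2n := (hv (n-k) a3 a4).1
                  apply mul_le_mul
                  · exact mul_le_mul_of_nonneg_left h1 (hminnn k hk)
                  · exact h2
                  · exact h2n
                  · exact mul_nonneg (hminnn k hk)
                      (mul_nonneg (Real.rpow_nonneg (by positivity) _) (le_of_lt (pow_pos hγpos _)))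
              _ = γ^(n-2) * ∑ k ∈ Finset.Ico 1 n,
                    (min (k:ℝ) ((n:ℝ)-(k:ℝ)))^α * (k:ℝ)^(-α-2) * ((n-k:ℕ):ℝ)^(-α-2) := by
                  rw [← Finset.mul_sum]
              _ ≤ γ^(n-2) * (A * (n:ℝ)^(-α-2)) :=
                  mul_le_mul_of_nonneg_left (key_sum α hα n hn2) hGnn
        have hih : ∀ m, 1 ≤ m → m < n → 0 ≤ b₁ m ∧ b₁ m ≤ (m:ℝ)^(-α-2) * γ^(m-1) := by
          intro m hm1 hm2
          exact ((ih m hm2) hm1).1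
        have hih2 : ∀ m, 1 ≤ m → m < n → 0 ≤ b₂ m ∧ b₂ m ≤ (m:ℝ)^(-α-2) * γ^(m-1) := by
          intro m hm1 hm2
          exact ((ih m hm2) hm1).2
        obtain ⟨hS1nn, hS1⟩ := hbound b₁ b₂ hih hih2
        obtain ⟨hS2nn, hS2⟩ := hbound b₁ b₁ hih hih
        constructor
        · constructor
          · rw [hrec₁ n hn2]
            exact mul_nonneg (div_nonneg hC₁.le (by linarith)) hS1nn
          · rw [hrec₁ n hn2]
            have hdivnn : (0:ℝ) ≤ C₁ / ((n:ℝ)-1) := div_nonneg hC₁.le (by linarith)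
            have hdiv : C₁ / ((n:ℝ)-1) ≤ C₁ := div_le_self hC₁.le (by linarith)
            calc C₁ / ((n:ℝ)-1) *
                  ∑ k ∈ Finset.Ico 1 n, (min (k:ℝ) ((n:ℝ)-(k:ℝ)))^α * b₁ k * b₂ (n-k)
                ≤ C₁ / ((n:ℝ)-1) * (γ^(n-2) * (A * (n:ℝ)^(-α-2))) :=
                  mul_le_mul_of_nonneg_left hS1 hdivnn
              _ ≤ C₁ * (γ^(n-2) * (A * (n:ℝ)^(-α-2))) := by
                  apply mul_le_mul_of_nonneg_right hdiv
                  positivity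
              _ = (C₁ * A) * (γ^(n-2) * (n:ℝ)^(-α-2)) := by ring
              _ ≤ γ * (γ^(n-2) * (n:ℝ)^(-α-2)) := by
                  apply mul_le_mul_of_nonneg_right hγC₁
                  exact mul_nonneg hGnn hPnn
              _ = (n:ℝ)^(-α-2) * (γ^(n-2) * γ) := by ring
              _ = (n:ℝ)^(-α-2) * γ^(n-1) := by rw [hpow]
        · constructor
          · rw [hrec₂ n hn2]
            apply mul_nonneg _ hS2nn
            apply div_nonneg _ (by linarith)
            positivity
          · rw [hrec₂ n hn2]
            have hdivnn : (0:ℝ) ≤ C₂ * (n:ℝ) / ((n:ℝ)-1) := by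
              apply div_nonneg _ (by linarith)
              positivity
            have hdiv : C₂ * (n:ℝ) / ((n:ℝ)-1) ≤ 2 * C₂ := by
              rw [div_le_iff₀ hn1pos]
              nlinarith
            calc C₂ * (n:ℝ) / ((n:ℝ)-1) *
                  ∑ k ∈ Finset.Ico 1 n, (min (k:ℝ) ((n:ℝ)-(k:ℝ)))^α * b₁ k * b₁ (n-k)
                ≤ C₂ * (n:ℝ) / ((n:ℝ)-1) * (γ^(n-2) * (A * (n:ℝ)^(-α-2))) :=
                  mul_le_mul_of_nonneg_left hS2 hdivnn
              _ ≤ (2 * C₂) * (γ^(n-2) * (A * (n:ℝ)^(-α-2))) := by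
                  apply mul_le_mul_of_nonneg_right hdiv
                  positivity
              _ = (C₂ * A * 2) * (γ^(n-2) * (n:ℝ)^(-α-2)) := by ring
              _ ≤ γ * (γ^(n-2) * (n:ℝ)^(-α-2)) := by
                  apply mul_le_mul_of_nonneg_right hγC₂
                  exact mul_nonneg hGnn hPnn
              _ = (n:ℝ)^(-α-2) * (γ^(n-2) * γ) := by ring
              _ = (n:ℝ)^(-α-2) * γ^(n-1) := by rw [hpow]
  intro n hn
  exact ⟨((main n hn).1).2, ((main n hn).2).2⟩
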